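/- Let S = M_n(R) with n ≥ 2 and let M be a nonzero left S-module. Then for every nonzero m in M there exists an idempotent e in S with e*m ≠ 0 and (1-e)*m ≠ 0. In particular, no nonzero module over M_n(R) with n ≥ 2 is partial. -/

import Mathlib

/-- A module `M` over a ring `A` is partial if for every idempotent `e` of `A`,
either `eM = 0` or `(1-e)M = 0`. -/
def IsPartialModule (A M : Type*) [Ring A] [AddCommGroup M] [Module A M] : Prop :=
  ∀ e : A, IsIdempotentElem e → (∀ m : M, e • m = 0) ∨ (∀ m : M, (1 - e) • m = 0)

private lemma sum_diag_stdBasisMatrix {R : Type*} [Ring R] {n : ℕ} :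
    (∑ i : Fin n, Matrix.single i i (1 : R)) = 1 := by
  ext a b
  simp only [Matrix.sum_apply, Matrix.one_apply, Matrix.single, Matrix.of_apply]
  by_cases h : a = b
  · subst h; simp
  · rw [if_neg h]
    refine Finset.sum_eq_zero fun i _ => ?_
    by_cases hi : i = a
    · subst hi; simp [fun hh : (i:Fin n) = b => h hh]
    · simp [Ne.symm hi, hi]

/-- For `S = Mₙ(R)` with `n ≥ 2` and a left `S`-module `M`, every nonzero `m ∈ M`
admits an idempotent `e ∈ S` with `e•m ≠ 0` and `(1-e)•m ≠ 0`; in particular no nonzero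
`S`-module is partial. -/
theorem matrix_module_not_partial {R : Type*} [Ring R] {n : ℕ} (hn : 2 ≤ n)
    (M : Type*) [AddCommGroup M] [Module (Matrix (Fin n) (Fin n) R) M] :
    (∀ m : M, m ≠ 0 →
      ∃ e : Matrix (Fin n) (Fin n) R,
        IsIdempotentElem e ∧ e • m ≠ 0 ∧ (1 - e) • m ≠ 0) ∧
    (Nontrivial M → ¬ IsPartialModule (Matrix (Fin n) (Fin n) R) M) := by
  set E : Fin n → Fin n → Matrix (Fin n) (Fin n) R :=
    fun i j => Matrix.single i j (1 : R) with hE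
  have key : ∀ m : M, m ≠ 0 →
      ∃ e : Matrix (Fin n) (Fin n) R,
        IsIdempotentElem e ∧ e • m ≠ 0 ∧ (1 - e) • m ≠ 0 := by
    intro m hm
    -- some diagonal idempotent acts nontrivially
    have hsum : (∑ i : Fin n, E i i • m) = m := by
      rw [← Finset.sum_smul, hE]
      simp [sum_diag_stdBasisMatrix]
    have : ∃ i : Fin n, E i i • m ≠ 0 := by
      by_contra h
      push_neg at h
      apply hm
      rw [← hsum]
      exact Finset.sum_eq_zero fun i _ => h i
    obtain ⟨i, hi⟩ := this
    have Emul0 : ∀ a b c d : Fin n, b ≠ c → E a b * E c d = 0 := by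
      intro a b c d h
      simp only [hE]
      exact Matrix.single_mul_single_of_ne _ _ _ _ h _
    have Emul1 : ∀ a b c : Fin n, E a b * E b c = E a c := by
      intro a b c
      simp only [hE, Matrix.single_mul_single_same, mul_one]
    by_cases hcase : (1 - E i i) • m ≠ 0
    · refine ⟨E i i, ?_, hi, hcase⟩
      simp [IsIdempotentElem, hE]
    · -- then E i i • m = m
      push_neg at hcase
      have hfix : E i i • m = m := by
        have := hcase
        rw [sub_smul, one_smul, sub_eq_zero] at this
        exact this.symm
      haveI : Nontrivial (Fin n) := Fin.nontrivial_iff_two_le.mpr hn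
      obtain ⟨j, hj⟩ := exists_ne i
      refine ⟨E j j + E j i, ?_, ?_, ?_⟩
      · show (E j j + E j i) * (E j j + E j i) = E j j + E j i
        rw [add_mul, mul_add, mul_add, Emul1, Emul0 j i j j (Ne.symm hj),
          Emul0 j i j i (Ne.symm hj), Emul1 j j i]
        abel
      · -- (E j j + E j i) • m = E j i • m ≠ 0
        have hjj : E j j • m = 0 := by
          rw [← hfix, ← mul_smul, Emul0 j j i i hj, zero_smul]
        have hji : E j i • m ≠ 0 := by
          intro h0
          apply hi
          have : E i j • (E j i • m) = 0 := by rw [h0, smul_zero]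
          rwa [← mul_smul, Emul1 i j i] at this
        rw [add_smul, hjj, zero_add]
        exact hji
      · intro h0
        rw [sub_smul, one_smul, add_smul, sub_eq_zero] at h0
        have hjj : E j j • m = 0 := by
          rw [← hfix, ← mul_smul, Emul0 j j i i hj, zero_smul]
        rw [hjj, zero_add] at h0
        apply hi
        rw [← hfix] at h0 ⊢
        rw [h0, ← mul_smul, Emul0 i i j i (Ne.symm hj), zero_smul]
  refine ⟨key, fun hnt hpart => ?_⟩
  obtain ⟨m, hm⟩ := exists_ne (0 : M)
  obtain ⟨e, he, h1, h2⟩ := key m hm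
  rcases hpart e he with h | h
  · exact h1 (h m)
  · exact h2 (h m)
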